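/- arXiv:2307.10026 — 2 statements merged into one kernel-verified Lean document; each statement's English description precedes it below -/
import Mathlib

section
/- Consider the mean-masked context-c2 distribution P'_{c2} over (x, y): y is uniform on {−1, +1} and, conditionally on y, independently x1 ~ N(μy, σ²I_d), x2 ~ N(0, (σ²/γ)I_d) (independent of y), x3 ~ N(−μ, η²I_d). Then the predictor w* = (1/(‖μ‖₂·√(1+γ²)))·[γμ, μ, 0_d] satisfies Acc_{P'_{c2}}(w*) = 0.5·erfc(−ρ1/√(1 + 1/γ³)). -/
open MeasureTheory ProbabilityTheory Real Filter
open scoped ENNReal NNReal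

noncomputable section

/-- Complementary error function `erfc x = (2/√π) ∫_x^∞ e^{−t²} dt`. -/
def erfc (x : ℝ) : ℝ := 2 / Real.sqrt Real.pi * ∫ t in Set.Ioi x, Real.exp (-t ^ 2)

/-- A vector in `ℝ^d`. -/
abbrev Vec (d : ℕ) := Fin d → ℝ

/-- The input space `ℝ^{3d}`, viewed as three blocks `x = [x1, x2, x3]`. -/
abbrev Inp (d : ℕ) := Vec d × Vec d × Vec d

/-- Euclidean dot product on `ℝ^d`. -/
def dot {d : ℕ} (v w : Vec d) : ℝ := ∑ i, v i * w i

/-- Euclidean norm on `ℝ^d`. -/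
def vnorm {d : ℕ} (v : Vec d) : ℝ := Real.sqrt (∑ i, v i ^ 2)

/-- Euclidean norm on the full input space `ℝ^{3d}`. -/
def xnorm {d : ℕ} (x : Inp d) : ℝ :=
  Real.sqrt ((∑ i, x.1 i ^ 2) + (∑ i, x.2.1 i ^ 2) + ∑ i, x.2.2 i ^ 2)

/-- Value `wᵀx` of the linear predictor `w` at input `x`. -/
def pred {d : ℕ} (w x : Inp d) : ℝ := dot w.1 x.1 + dot w.2.1 x.2.1 + dot w.2.2 x.2.2

/-- Isotropic Gaussian `N(m, v·I_d)` on `ℝ^d` (product of coordinate Gaussians). -/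
def gaussVec (d : ℕ) (m : Vec d) (v : ℝ) : Measure (Vec d) :=
  Measure.pi fun i => gaussianReal (m i) (Real.toNNReal v)

/-- Conditional law of `x` given the label `y` in context `c1`:
`x1 ~ N(μy, σ²I)`, `x2 ~ N(μy, γσ²I)`, `x3 ~ N(μ, η²I)`, independent blocks. -/
def condX1 (d : ℕ) (μ : Vec d) (σ γ η : ℝ) (y : ℝ) : Measure (Inp d) :=
  (gaussVec d (fun i => μ i * y) (σ ^ 2)).prod
    ((gaussVec d (fun i => μ i * y) (γ * σ ^ 2)).prod
      (gaussVec d μ (η ^ 2)))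

/-- Conditional law of `x` given the label `y` in context `c2`:
`x1 ~ N(μy, σ²I)`, `x2 ~ N(−μy, (σ²/γ)I)`, `x3 ~ N(−μ, η²I)`, independent blocks. -/
def condX2 (d : ℕ) (μ : Vec d) (σ γ η : ℝ) (y : ℝ) : Measure (Inp d) :=
  (gaussVec d (fun i => μ i * y) (σ ^ 2)).prod
    ((gaussVec d (fun i => -μ i * y) (σ ^ 2 / γ)).prod
      (gaussVec d (fun i => -μ i) (η ^ 2)))

/-- Joint law of `(x, y)`: `y` uniform on `{−1, 1}`, then `x ~ cond y`. -/
def jointOf {d : ℕ} (cond : ℝ → Measure (Inp d)) : Measure (Inp d × ℝ) :=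
  (2 : ℝ≥0∞)⁻¹ • (cond 1).prod (Measure.dirac (1 : ℝ))
    + (2 : ℝ≥0∞)⁻¹ • (cond (-1)).prod (Measure.dirac (-1 : ℝ))

/-- The context-`c1` distribution over `(x, y)`. -/
def Pc1 (d : ℕ) (μ : Vec d) (σ γ η : ℝ) : Measure (Inp d × ℝ) :=
  jointOf (condX1 d μ σ γ η)

/-- The context-`c2` distribution over `(x, y)`. -/
def Pc2 (d : ℕ) (μ : Vec d) (σ γ η : ℝ) : Measure (Inp d × ℝ) :=
  jointOf (condX2 d μ σ γ η)

/-- Accuracy `Acc_P(w) = P(sign(wᵀx) = y)` of linear predictor `w` under joint law `P`. -/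
def AccP {d : ℕ} (P : Measure (Inp d × ℝ)) (w : Inp d) : ℝ :=
  (P {p | Real.sign (pred w p.1) = p.2}).toReal

/-- Norm-bounded linear predictors `W1 = {w ∈ ℝ^{3d} : ‖w‖₂ ≤ 1}`. -/
def W1 (d : ℕ) : Set (Inp d) := {w | xnorm w ≤ 1}

/-- Population exponential loss `E_P[exp(−y·wᵀx)]`. -/
def expLoss {d : ℕ} (P : Measure (Inp d × ℝ)) (w : Inp d) : ℝ :=
  ∫ p, Real.exp (-(p.2 * pred w p.1)) ∂P

end

/-- Conditional law of `x` given `y` in the mean-masked context `c2`: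
`x1 ~ N(μy, σ²I)`, `x2 ~ N(0, (σ²/γ)I)` independent of `y`, `x3 ~ N(−μ, η²I)`. -/
noncomputable def condX2masked (d : ℕ) (μ : Vec d) (σ γ η : ℝ) (y : ℝ) : Measure (Inp d) :=
  (gaussVec d (fun i => μ i * y) (σ ^ 2)).prod
    ((gaussVec d (fun _ => 0) (σ ^ 2 / γ)).prod
      (gaussVec d (fun i => -μ i) (η ^ 2)))

/-- The mean-masked context-`c2` distribution `P'_c2`. -/
noncomputable def Pc2masked (d : ℕ) (μ : Vec d) (σ γ η : ℝ) : Measure (Inp d × ℝ) :=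
  jointOf (condX2masked d μ σ γ η)


-- ========== Auxiliary lemmas ==========

section Aux

open MeasureTheory ProbabilityTheory Real
open scoped ENNReal NNReal

lemma sq_toNNReal_aux (c : ℝ) : (⟨c^2, sq_nonneg c⟩ : ℝ≥0) = Real.toNNReal (c^2) := by
  ext
  simp [Real.coe_toNNReal _ (sq_nonneg c)]

lemma gauss_pdf_conv_aux (m₁ m₂ : ℝ) (v₁ v₂ : ℝ≥0) (h₁ : v₁ ≠ 0) (h₂ : v₂ ≠ 0) (z : ℝ) :
    ∫ x, gaussianPDFReal m₁ v₁ x * gaussianPDFReal m₂ v₂ (z - x)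
      = gaussianPDFReal (m₁ + m₂) (v₁ + v₂) z := by
  have hv₁ : (0:ℝ) < v₁ := lt_of_le_of_ne v₁.coe_nonneg (by exact_mod_cast (Ne.symm h₁))
  have hv₂ : (0:ℝ) < v₂ := lt_of_le_of_ne v₂.coe_nonneg (by exact_mod_cast (Ne.symm h₂))
  set A : ℝ := ((v₁:ℝ) + v₂) / (2 * v₁ * v₂) with hA
  have hApos : 0 < A := by positivity
  set b : ℝ := (m₁ * v₂ + (z - m₂) * v₁) / ((v₁:ℝ) + v₂) with hb
  have key : ∀ x, gaussianPDFReal m₁ v₁ x * gaussianPDFReal m₂ v₂ (z - x)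
      = gaussianPDFReal (m₁+m₂) (v₁+v₂) z * ((Real.sqrt (π / A))⁻¹ * rexp (-A * (x - b)^2)) := by
    intro x
    simp only [gaussianPDFReal, NNReal.coe_add]
    have hconst : (Real.sqrt (2*π*v₁))⁻¹ * (Real.sqrt (2*π*v₂))⁻¹
        = (Real.sqrt (2*π*((v₁:ℝ)+v₂)))⁻¹ * (Real.sqrt (π / A))⁻¹ := by
      rw [← mul_inv, ← mul_inv, ← Real.sqrt_mul (by positivity), ← Real.sqrt_mul (by positivity)]
      congr 1
      rw [hA]
      field_simp
    have hexp : rexp (-(x - m₁)^2 / (2*(v₁:ℝ))) * rexp (-(z - x - m₂)^2/(2*(v₂:ℝ)))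
        = rexp (-(z - (m₁+m₂))^2/(2*((v₁:ℝ)+v₂))) * rexp (-A*(x-b)^2) := by
      rw [← Real.exp_add, ← Real.exp_add]
      congr 1
      rw [hA, hb]
      field_simp
      ring
    calc (Real.sqrt (2*π*v₁))⁻¹ * rexp (-(x - m₁)^2 / (2*(v₁:ℝ)))
          * ((Real.sqrt (2*π*v₂))⁻¹ * rexp (-(z - x - m₂)^2/(2*(v₂:ℝ))))
        = ((Real.sqrt (2*π*v₁))⁻¹ * (Real.sqrt (2*π*v₂))⁻¹)
          * (rexp (-(x - m₁)^2 / (2*(v₁:ℝ))) * rexp (-(z - x - m₂)^2/(2*(v₂:ℝ)))) := by ring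
      _ = ((Real.sqrt (2*π*((v₁:ℝ)+v₂)))⁻¹ * (Real.sqrt (π / A))⁻¹)
          * (rexp (-(z - (m₁+m₂))^2/(2*((v₁:ℝ)+v₂))) * rexp (-A*(x-b)^2)) := by
            rw [hconst, hexp]
      _ = _ := by ring
  simp_rw [key]
  rw [integral_const_mul, integral_const_mul]
  have hgauss : ∫ x : ℝ, rexp (-A * (x - b)^2) = Real.sqrt (π / A) := by
    rw [← integral_gaussian A]
    exact integral_sub_right_eq_self (fun x => rexp (-A * x^2)) b
  rw [hgauss, inv_mul_cancel₀ (by positivity), mul_one]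

lemma gaussianPDFReal_le_aux (m : ℝ) (v : ℝ≥0) (x : ℝ) :
    gaussianPDFReal m v x ≤ (Real.sqrt (2*π*v))⁻¹ := by
  rw [gaussianPDFReal]
  have h1 : rexp (-(x - m)^2 / (2*(v:ℝ))) ≤ 1 := by
    rw [Real.exp_le_one_iff]
    apply div_nonpos_of_nonpos_of_nonneg
    · exact neg_nonpos.mpr (sq_nonneg _)
    · positivity
  calc (Real.sqrt (2*π*v))⁻¹ * rexp (-(x - m)^2 / (2*(v:ℝ)))
      ≤ (Real.sqrt (2*π*v))⁻¹ * 1 := by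
        apply mul_le_mul_of_nonneg_left h1 (by positivity)
    _ = _ := mul_one _

lemma gaussPDF_lintegral_conv_aux (m₁ m₂ : ℝ) (v₁ v₂ : ℝ≥0) (h₁ : v₁ ≠ 0) (h₂ : v₂ ≠ 0) (z : ℝ) :
    ∫⁻ x, gaussianPDF m₁ v₁ x * gaussianPDF m₂ v₂ (z - x)
      = gaussianPDF (m₁ + m₂) (v₁ + v₂) z := by
  simp only [gaussianPDF]
  have hint : Integrable (fun x => gaussianPDFReal m₁ v₁ x * gaussianPDFReal m₂ v₂ (z - x)) := by
    have : Integrable (fun x => (fun x => gaussianPDFReal m₂ v₂ (z - x)) x * gaussianPDFReal m₁ v₁ x) := by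
      apply Integrable.bdd_mul (c := (Real.sqrt (2*π*v₂))⁻¹) (integrable_gaussianPDFReal m₁ v₁)
      · exact (((measurable_gaussianPDFReal m₂ v₂).comp (measurable_const.sub measurable_id)).aestronglyMeasurable)
      · exact ae_of_all _ fun x => by
          rw [Real.norm_eq_abs, abs_of_nonneg (gaussianPDFReal_nonneg _ _ _)]
          exact gaussianPDFReal_le_aux m₂ v₂ _
    simpa [mul_comm] using this
  calc ∫⁻ x, ENNReal.ofReal (gaussianPDFReal m₁ v₁ x) * ENNReal.ofReal (gaussianPDFReal m₂ v₂ (z - x))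
      = ∫⁻ x, ENNReal.ofReal (gaussianPDFReal m₁ v₁ x * gaussianPDFReal m₂ v₂ (z - x)) := by
        simp_rw [ENNReal.ofReal_mul (gaussianPDFReal_nonneg m₁ v₁ _)]
    _ = ENNReal.ofReal (∫ x, gaussianPDFReal m₁ v₁ x * gaussianPDFReal m₂ v₂ (z - x)) := by
        rw [← ofReal_integral_eq_lintegral_ofReal hint
          (ae_of_all _ fun x => mul_nonneg (gaussianPDFReal_nonneg _ _ _) (gaussianPDFReal_nonneg _ _ _))]
    _ = _ := by rw [gauss_pdf_conv_aux m₁ m₂ v₁ v₂ h₁ h₂ z]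

lemma gauss_conv_aux (m₁ m₂ : ℝ) (v₁ v₂ : ℝ≥0) :
    ((gaussianReal m₁ v₁).prod (gaussianReal m₂ v₂)).map (fun p => p.1 + p.2)
      = gaussianReal (m₁ + m₂) (v₁ + v₂) := by
  by_cases h₁ : v₁ = 0
  · subst h₁
    rw [gaussianReal_zero_var, Measure.dirac_prod,
      Measure.map_map measurable_add measurable_prodMk_left]
    have : ((fun p : ℝ × ℝ => p.1 + p.2) ∘ Prod.mk m₁) = (m₁ + ·) := rfl
    rw [this, gaussianReal_map_const_add, add_comm m₂ m₁, zero_add]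
  by_cases h₂ : v₂ = 0
  · subst h₂
    rw [gaussianReal_zero_var, Measure.prod_dirac,
      Measure.map_map measurable_add measurable_prodMk_right]
    have : ((fun p : ℝ × ℝ => p.1 + p.2) ∘ (fun x => (x, m₂))) = (· + m₂) := rfl
    rw [this, gaussianReal_map_add_const, add_zero]
  have h₁₂ : v₁ + v₂ ≠ 0 := by
    simp only [ne_eq, add_eq_zero]
    tauto
  ext s hs
  rw [Measure.map_apply measurable_add hs,
    Measure.prod_apply (measurable_add hs)]
  have h_inner : ∀ x : ℝ, (gaussianReal m₂ v₂) (Prod.mk x ⁻¹' ((fun p : ℝ × ℝ => p.1 + p.2) ⁻¹' s))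
      = ∫⁻ z, s.indicator (fun _ => (1:ℝ≥0∞)) z * gaussianPDF m₂ v₂ (z - x) := by
    intro x
    rw [gaussianReal_of_var_ne_zero _ h₂, withDensity_apply' _]
    have hset : Prod.mk x ⁻¹' ((fun p : ℝ × ℝ => p.1 + p.2) ⁻¹' s) = (fun y => x + y) ⁻¹' s := rfl
    rw [hset, ← lintegral_indicator (measurable_const_add x hs) _]
    have hpt : ∀ y, ((fun y => x + y) ⁻¹' s).indicator (gaussianPDF m₂ v₂) y
        = (fun z => s.indicator (fun _ => (1:ℝ≥0∞)) z * gaussianPDF m₂ v₂ (z - x)) (x + y) := by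
      intro y
      by_cases hy : x + y ∈ s <;>
        simp [Set.indicator, hy, add_sub_cancel_left]
    simp_rw [hpt]
    exact lintegral_add_left_eq_self (μ := (volume : Measure ℝ))
      (fun z => s.indicator (fun _ => (1:ℝ≥0∞)) z * gaussianPDF m₂ v₂ (z - x)) x
  simp_rw [h_inner]
  have hindmeas : Measurable (s.indicator (fun _ => (1:ℝ≥0∞))) := measurable_const.indicator hs
  have hFmeas : Measurable (Function.uncurry fun x z =>
      s.indicator (fun _ => (1:ℝ≥0∞)) z * gaussianPDF m₂ v₂ (z - x)) := by
    apply Measurable.mul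
    · exact hindmeas.comp measurable_snd
    · exact (measurable_gaussianPDF m₂ v₂).comp (measurable_snd.sub measurable_fst)
  rw [gaussianReal_of_var_ne_zero _ h₁,
    lintegral_withDensity_eq_lintegral_mul _ (measurable_gaussianPDF _ _)
      hFmeas.lintegral_prod_right]
  have hstep : ∀ x : ℝ, gaussianPDF m₁ v₁ x * ∫⁻ z, s.indicator (fun _ => (1:ℝ≥0∞)) z * gaussianPDF m₂ v₂ (z - x)
      = ∫⁻ z, s.indicator (fun _ => (1:ℝ≥0∞)) z * (gaussianPDF m₁ v₁ x * gaussianPDF m₂ v₂ (z - x)) := by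
    intro x
    rw [← lintegral_const_mul' _ _ (show gaussianPDF m₁ v₁ x ≠ ⊤ from ENNReal.ofReal_ne_top)]
    congr 1 with z
    ring
  simp only [Pi.mul_apply]
  simp_rw [hstep]
  rw [lintegral_lintegral_swap]
  swap
  · exact (hFmeas.mul ((measurable_gaussianPDF m₁ v₁).comp measurable_fst)).aemeasurable.congr
      (by
        apply ae_of_all
        rintro ⟨x, z⟩
        simp [Function.uncurry]
        ring)
  have hindnetop : ∀ z : ℝ, s.indicator (fun _ => (1:ℝ≥0∞)) z ≠ ⊤ := by
    intro z
    by_cases hz : z ∈ s <;> simp [Set.indicator, hz]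
  have hstep2 : ∀ z : ℝ, (∫⁻ x, s.indicator (fun _ => (1:ℝ≥0∞)) z * (gaussianPDF m₁ v₁ x * gaussianPDF m₂ v₂ (z - x)))
      = s.indicator (fun _ => (1:ℝ≥0∞)) z * gaussianPDF (m₁ + m₂) (v₁ + v₂) z := by
    intro z
    rw [lintegral_const_mul' _ _ (hindnetop z), gaussPDF_lintegral_conv_aux m₁ m₂ v₁ v₂ h₁ h₂ z]
  simp_rw [hstep2]
  have hind2 : ∀ z : ℝ, s.indicator (fun _ => (1:ℝ≥0∞)) z * gaussianPDF (m₁ + m₂) (v₁ + v₂) z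
      = s.indicator (gaussianPDF (m₁ + m₂) (v₁ + v₂)) z := by
    intro z
    by_cases hz : z ∈ s <;> simp [Set.indicator, hz]
  simp_rw [hind2]
  rw [lintegral_indicator hs _, gaussianReal_of_var_ne_zero _ h₁₂, withDensity_apply' _]

lemma map_fst_add_snd_aux {α β : Type*} [MeasurableSpace α] [MeasurableSpace β]
    (μ : Measure α) (ν : Measure β) [SFinite μ] [SFinite ν]
    {f : α → ℝ} {g : β → ℝ} (hf : Measurable f) (hg : Measurable g)
    {m₁ m₂ : ℝ} {v₁ v₂ : ℝ≥0}
    (h1 : μ.map f = gaussianReal m₁ v₁) (h2 : ν.map g = gaussianReal m₂ v₂) :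
    (μ.prod ν).map (fun p => f p.1 + g p.2) = gaussianReal (m₁ + m₂) (v₁ + v₂) := by
  have hc : (fun p : α × β => f p.1 + g p.2) = (fun q : ℝ × ℝ => q.1 + q.2) ∘ (Prod.map f g) := rfl
  rw [hc, ← Measure.map_map measurable_add (hf.prodMap hg), ← Measure.map_prod_map _ _ hf hg,
    h1, h2, gauss_conv_aux]

lemma pi_map_sum_aux : ∀ (d : ℕ) (a m : Fin d → ℝ) (v : Fin d → ℝ≥0),
    (Measure.pi fun i => gaussianReal (m i) (v i)).map (fun x => ∑ i, a i * x i)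
      = gaussianReal (∑ i, a i * m i) (∑ i, Real.toNNReal ((a i)^2) * v i) := by
  intro d
  induction d with
  | zero =>
    intro a m v
    simp only [Finset.univ_eq_empty, Finset.sum_empty]
    rw [Measure.map_const]
    simp [gaussianReal_zero_var]
  | succ n ih =>
    intro a m v
    have hmp := measurePreserving_piFinSuccAbove (fun i => gaussianReal (m i) (v i)) 0
    set e := MeasurableEquiv.piFinSuccAbove (fun _ : Fin (n+1) => ℝ) 0 with he
    have hF : (fun x : Fin (n+1) → ℝ => ∑ i, a i * x i)
        = (fun p : ℝ × (Fin n → ℝ) => (a 0) * p.1 + ∑ j, a j.succ * p.2 j) ∘ e := by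
      funext x
      simp only [Function.comp_apply, he, MeasurableEquiv.piFinSuccAbove_apply,
        Fin.zero_succAbove]
      rw [Fin.sum_univ_succ]
      rfl
    rw [hF, ← Measure.map_map (by
        apply Measurable.add
        · exact measurable_fst.const_mul _
        · exact Finset.measurable_sum _ fun j _ => ((measurable_pi_apply j).comp measurable_snd).const_mul _
      ) e.measurable, hmp.map_eq]
    simp only [Fin.zero_succAbove]
    rw [map_fst_add_snd_aux _ _ (measurable_const_mul _)
      (Finset.measurable_sum _ fun j _ => (measurable_pi_apply j).const_mul _)
      (by rw [gaussianReal_map_const_mul])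
      (ih (fun j => a j.succ) (fun j => m j.succ) (fun j => v j.succ))]
    rw [Fin.sum_univ_succ (f := fun i => a i * m i),
      Fin.sum_univ_succ (f := fun i => Real.toNNReal ((a i)^2) * v i)]
    rw [← sq_toNNReal_aux (a 0)]
    rfl

lemma gaussVec_map_sum_aux (d : ℕ) (a m : Fin d → ℝ) {v : ℝ} (hv : 0 ≤ v) :
    (gaussVec d m v).map (fun x => ∑ i, a i * x i)
      = gaussianReal (∑ i, a i * m i) (Real.toNNReal ((∑ i, (a i)^2) * v)) := by
  rw [show gaussVec d m v = Measure.pi fun i => gaussianReal (m i) (Real.toNNReal v) from rfl,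
    pi_map_sum_aux]
  congr 1
  calc ∑ i, Real.toNNReal ((a i)^2) * Real.toNNReal v
      = ∑ i, Real.toNNReal ((a i)^2 * v) := by
        refine Finset.sum_congr rfl fun i _ => (Real.toNNReal_mul (sq_nonneg _)).symm
    _ = Real.toNNReal (∑ i, (a i)^2 * v) :=
        (Real.toNNReal_sum_of_nonneg (fun i _ => mul_nonneg (sq_nonneg _) hv)).symm
    _ = _ := by rw [Finset.sum_mul]

instance gaussVec_isProb (d : ℕ) (m : Vec d) (v : ℝ) : IsProbabilityMeasure (gaussVec d m v) :=
  inferInstanceAs (IsProbabilityMeasure (Measure.pi _))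

lemma gauss_std_Ioi_aux (t : ℝ) :
    gaussianReal 0 (1/2) (Set.Ioi t) = ENNReal.ofReal (0.5 * erfc t) := by
  rw [gaussianReal_apply_eq_integral _ (by norm_num) _]
  congr 1
  have hpdf : ∀ x : ℝ, gaussianPDFReal 0 (1/2) x = (Real.sqrt π)⁻¹ * Real.exp (-x^2) := by
    intro x
    rw [gaussianPDFReal]
    norm_num
    rw [show √2 * ((√π)⁻¹ * (√2)⁻¹) = (√π)⁻¹ * (√2 * (√2)⁻¹) by ring,
      mul_inv_cancel₀ (by positivity : √2 ≠ (0:ℝ)), mul_one]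
  simp_rw [hpdf]
  rw [integral_const_mul, erfc]
  rw [show (0.5 : ℝ) * (2 / Real.sqrt π * ∫ t in Set.Ioi t, Real.exp (-t^2))
    = (Real.sqrt π)⁻¹ * ∫ t in Set.Ioi t, Real.exp (-t^2) by ring]

lemma gauss_Ioi_aux (M : ℝ) (v : ℝ≥0) (hv : v ≠ 0) :
    gaussianReal M v (Set.Ioi 0) = ENNReal.ofReal (0.5 * erfc (-(M / Real.sqrt (2 * v)))) := by
  have hvpos : (0:ℝ) < v := lt_of_le_of_ne v.coe_nonneg (by exact_mod_cast Ne.symm hv)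
  set s : ℝ := Real.sqrt (2 * v) with hs
  have hspos : 0 < s := Real.sqrt_pos.mpr (by positivity)
  have hs2 : s^2 = 2 * v := Real.sq_sqrt (by positivity)
  have h1 : (gaussianReal M v).map (fun x => s⁻¹ * x) = gaussianReal (s⁻¹ * M) (1/2) := by
    rw [gaussianReal_map_const_mul]
    congr 1
    ext
    push_cast
    rw [inv_pow, hs2]
    field_simp
  have h2 : ((gaussianReal M v).map (fun x => s⁻¹ * x)).map (fun x => x + (-(M/s)))
      = gaussianReal 0 (1/2) := by
    rw [h1, gaussianReal_map_add_const]
    congr 1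
    field_simp
    ring
  rw [Measure.map_map (measurable_add_const _) (measurable_const_mul _)] at h2
  have h3 : ((fun x => x + -(M/s)) ∘ (fun x => s⁻¹ * x)) ⁻¹' (Set.Ioi (-(M/s))) = Set.Ioi 0 := by
    ext x
    simp only [Set.mem_preimage, Function.comp_apply, Set.mem_Ioi]
    constructor
    · intro h
      have : 0 < s⁻¹ * x := by linarith
      nlinarith [inv_pos.mpr hspos]
    · intro h
      have : 0 < s⁻¹ * x := by positivity
      linarith
  calc gaussianReal M v (Set.Ioi 0)
      = gaussianReal M v (((fun x => x + -(M/s)) ∘ (fun x => s⁻¹ * x)) ⁻¹' (Set.Ioi (-(M/s)))) := by rw [h3]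
    _ = ((gaussianReal M v).map ((fun x => x + -(M/s)) ∘ (fun x => s⁻¹ * x))) (Set.Ioi (-(M/s))) := by
        rw [Measure.map_apply ((measurable_add_const _).comp (measurable_const_mul _)) measurableSet_Ioi]
    _ = gaussianReal 0 (1/2) (Set.Ioi (-(M/s))) := by rw [h2]
    _ = _ := gauss_std_Ioi_aux _

lemma gauss_Iio_neg_aux (M : ℝ) (v : ℝ≥0) :
    gaussianReal (-M) v (Set.Iio 0) = gaussianReal M v (Set.Ioi 0) := by
  have h := gaussianReal_map_const_mul (μ := -M) (v := v) (-1)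
  norm_num at h
  rw [← h, Measure.map_apply measurable_neg measurableSet_Ioi]
  congr 1
  ext x
  simp only [Set.mem_preimage, Set.mem_Ioi, Set.mem_Iio]
  constructor <;> intro h <;> linarith

lemma measurable_realSign : Measurable Real.sign := by
  have h : Real.sign = fun r : ℝ => if r < 0 then (-1:ℝ) else if 0 < r then 1 else 0 := by
    funext r; rfl
  rw [h]
  refine Measurable.ite ?_ measurable_const (Measurable.ite ?_ measurable_const measurable_const)
  · exact measurableSet_lt measurable_id measurable_const
  · exact measurableSet_lt measurable_const measurable_id

lemma real_sign_eq_one_iff {t : ℝ} : Real.sign t = 1 ↔ 0 < t := by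
  rcases lt_trichotomy t 0 with h|h|h
  · rw [Real.sign_of_neg h]
    constructor
    · intro hh; norm_num at hh
    · intro hh; linarith
  · subst h
    rw [Real.sign_zero]
    constructor
    · intro hh; norm_num at hh
    · intro hh; linarith
  · simp [Real.sign_of_pos h, h]

lemma real_sign_eq_neg_one_iff {t : ℝ} : Real.sign t = -1 ↔ t < 0 := by
  rcases lt_trichotomy t 0 with h|h|h
  · simp [Real.sign_of_neg h, h]
  · subst h
    rw [Real.sign_zero]
    constructor
    · intro hh; norm_num at hh
    · intro hh; linarith
  · rw [Real.sign_of_pos h]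
    constructor
    · intro hh; norm_num at hh
    · intro hh; linarith

instance condX2masked_isProb (d : ℕ) (μ : Vec d) (σ γ η y : ℝ) :
    IsProbabilityMeasure (condX2masked d μ σ γ η y) := by
  unfold condX2masked
  infer_instance

lemma erfc_nonneg_aux (t : ℝ) : 0 ≤ erfc t := by
  rw [erfc]
  apply mul_nonneg
  · positivity
  · exact integral_nonneg fun x => (Real.exp_pos _).le

end Aux

theorem enp_accuracy_on_masked_c2 (d : ℕ) (hd : 1 ≤ d) (μ : Vec d) (hμ : μ ≠ 0)
    (σ γ η : ℝ) (hσ : 0 < σ) (hγ : 0 < γ) (hη : 0 < η) :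
    AccP (Pc2masked d μ σ γ η)
        ((1 / (vnorm μ * Real.sqrt (1 + γ ^ 2))) • ((γ • μ, μ, (0 : Vec d)) : Inp d))
      = 0.5 * erfc (-((vnorm μ / (Real.sqrt 2 * σ)) / Real.sqrt (1 + 1 / γ ^ 3))) := by
  set c : ℝ := 1 / (vnorm μ * Real.sqrt (1 + γ ^ 2)) with hc
  set w : Inp d := c • ((γ • μ, μ, (0 : Vec d)) : Inp d) with hwdef
  set S : ℝ := ∑ i, μ i ^ 2 with hSdef
  obtain ⟨j, hj⟩ : ∃ j, μ j ≠ 0 := Function.ne_iff.mp hμ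
  have hSpos : 0 < S := by
    have h0 : 0 < μ j ^ 2 := by positivity
    exact lt_of_lt_of_le h0 (Finset.single_le_sum (fun i _ => sq_nonneg (μ i)) (Finset.mem_univ j))
  have hnorm : vnorm μ = Real.sqrt S := rfl
  have hnpos : 0 < vnorm μ := by rw [hnorm]; positivity
  have hcpos : 0 < c := by
    rw [hc]
    have h1 : 0 < Real.sqrt (1 + γ ^ 2) := Real.sqrt_pos.mpr (by positivity)
    positivity
  -- the predictor as a sum of three block functionals
  have hpred : (fun x : Inp d => pred w x)
      = fun x => (fun z : Vec d => ∑ i, (c * (γ * μ i)) * z i) x.1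
          + ((fun p : Vec d × Vec d => (fun z : Vec d => ∑ i, (c * μ i) * z i) p.1
              + (fun z : Vec d => ∑ i, (c * (0:ℝ)) * z i) p.2) x.2) := by
    funext x
    show dot w.1 x.1 + dot w.2.1 x.2.1 + dot w.2.2 x.2.2 = _
    rw [add_assoc]
    rfl
  have hm1 : Measurable (fun z : Vec d => ∑ i, (c * (γ * μ i)) * z i) :=
    Finset.measurable_sum _ fun i _ => (measurable_pi_apply i).const_mul _
  have hm2 : Measurable (fun z : Vec d => ∑ i, (c * μ i) * z i) :=
    Finset.measurable_sum _ fun i _ => (measurable_pi_apply i).const_mul _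
  have hm3 : Measurable (fun z : Vec d => ∑ i, (c * (0:ℝ)) * z i) :=
    Finset.measurable_sum _ fun i _ => (measurable_pi_apply i).const_mul _
  have hm23 : Measurable (fun p : Vec d × Vec d =>
      (∑ i, (c * μ i) * p.1 i) + ∑ i, (c * (0:ℝ)) * p.2 i) :=
    (hm2.comp measurable_fst).add (hm3.comp measurable_snd)
  have hm : Measurable (fun x : Inp d => pred w x) := by
    rw [hpred]
    exact (hm1.comp measurable_fst).add (hm23.comp measurable_snd)
  set Vr : ℝ := c^2*γ^2*S*σ^2 + c^2*S*(σ^2/γ) with hVr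
  have hVrpos : 0 < Vr := by rw [hVr]; positivity
  have hVnn_ne : Real.toNNReal Vr ≠ 0 := by
    simp only [ne_eq, Real.toNNReal_eq_zero, not_le]
    exact hVrpos
  -- law of the predictor value
  have hlaw : ∀ y : ℝ, (condX2masked d μ σ γ η y).map (fun x => pred w x)
      = gaussianReal (c*γ*S*y) (Real.toNNReal Vr) := by
    intro y
    rw [hpred]
    rw [show condX2masked d μ σ γ η y
        = (gaussVec d (fun i => μ i * y) (σ ^ 2)).prod
            ((gaussVec d (fun _ => 0) (σ ^ 2 / γ)).prod
              (gaussVec d (fun i => -μ i) (η ^ 2))) from rfl]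
    have h2 : (gaussVec d (fun _ => (0:ℝ)) (σ ^ 2 / γ)).map (fun z => ∑ i, (c * μ i) * z i)
        = gaussianReal 0 (Real.toNNReal (c^2*S*(σ^2/γ))) := by
      rw [gaussVec_map_sum_aux d _ _ (by positivity)]
      congr 1
      · simp
      · congr 1
        rw [show ∑ i, (c * μ i)^2 = c^2 * S by
          simp only [hSdef, Finset.mul_sum]
          exact Finset.sum_congr rfl fun i _ => by ring]
    have h3 : (gaussVec d (fun i => -μ i) (η ^ 2)).map (fun z => ∑ i, (c * (0:ℝ)) * z i)
        = gaussianReal 0 0 := by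
      rw [gaussVec_map_sum_aux d _ _ (sq_nonneg η)]
      congr 1 <;> simp
    have h23 := map_fst_add_snd_aux (gaussVec d (fun _ => (0:ℝ)) (σ ^ 2 / γ))
      (gaussVec d (fun i => -μ i) (η ^ 2)) hm2 hm3 h2 h3
    rw [add_zero, add_zero] at h23
    have h1 : (gaussVec d (fun i => μ i * y) (σ ^ 2)).map (fun z => ∑ i, (c * (γ * μ i)) * z i)
        = gaussianReal (c*γ*S*y) (Real.toNNReal (c^2*γ^2*S*σ^2)) := by
      rw [gaussVec_map_sum_aux d _ _ (sq_nonneg σ)]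
      congr 1
      · rw [show ∑ i, (c * (γ * μ i)) * (μ i * y) = c*γ*S*y by
          simp only [hSdef, Finset.mul_sum, Finset.sum_mul]
          exact Finset.sum_congr rfl fun i _ => by ring]
      · congr 1
        rw [show ∑ i, (c * (γ * μ i))^2 = c^2*γ^2*S by
          simp only [hSdef, Finset.mul_sum]
          exact Finset.sum_congr rfl fun i _ => by ring]
    have hmain := map_fst_add_snd_aux (gaussVec d (fun i => μ i * y) (σ ^ 2))
      ((gaussVec d (fun _ => (0:ℝ)) (σ ^ 2 / γ)).prod (gaussVec d (fun i => -μ i) (η ^ 2)))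
      hm1 hm23 h1 h23
    rw [add_zero] at hmain
    rw [hmain, hVr, Real.toNNReal_add (by positivity) (by positivity)]
  -- measurability of the accuracy event
  set Sevt : Set (Inp d × ℝ) := {p | Real.sign (pred w p.1) = p.2} with hSevt
  have hSevt_meas : MeasurableSet Sevt :=
    measurableSet_eq_fun ((measurable_realSign.comp (hm.comp measurable_fst))) measurable_snd
  -- value of the half-space probabilities
  set q : ℝ := 0.5 * erfc (-(c*γ*S / Real.sqrt (2 * Vr))) with hq
  have hA : ((condX2masked d μ σ γ η 1).prod (Measure.dirac (1:ℝ))) Sevt = ENNReal.ofReal q := by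
    rw [Measure.prod_dirac, Measure.map_apply measurable_prodMk_right hSevt_meas]
    have hset : (fun x : Inp d => (x, (1:ℝ))) ⁻¹' Sevt = (fun x => pred w x) ⁻¹' (Set.Ioi 0) := by
      ext x
      simp only [hSevt, Set.mem_preimage, Set.mem_setOf_eq, Set.mem_Ioi]
      exact real_sign_eq_one_iff
    rw [hset, ← Measure.map_apply hm measurableSet_Ioi, hlaw 1, mul_one,
      gauss_Ioi_aux _ _ hVnn_ne, Real.coe_toNNReal _ hVrpos.le]
  have hB : ((condX2masked d μ σ γ η (-1)).prod (Measure.dirac (-1:ℝ))) Sevt = ENNReal.ofReal q := by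
    rw [Measure.prod_dirac, Measure.map_apply measurable_prodMk_right hSevt_meas]
    have hset : (fun x : Inp d => (x, (-1:ℝ))) ⁻¹' Sevt = (fun x => pred w x) ⁻¹' (Set.Iio 0) := by
      ext x
      simp only [hSevt, Set.mem_preimage, Set.mem_setOf_eq, Set.mem_Iio]
      exact real_sign_eq_neg_one_iff
    rw [hset, ← Measure.map_apply hm measurableSet_Iio, hlaw (-1),
      show c*γ*S*(-1) = -(c*γ*S) by ring, gauss_Iio_neg_aux,
      gauss_Ioi_aux _ _ hVnn_ne, Real.coe_toNNReal _ hVrpos.le]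
  have hPS : Pc2masked d μ σ γ η Sevt = ENNReal.ofReal q := by
    rw [show Pc2masked d μ σ γ η = jointOf (condX2masked d μ σ γ η) from rfl, jointOf]
    have hhalf : (2:ℝ≥0∞)⁻¹ + 2⁻¹ = 1 := by
      rw [← two_mul, ENNReal.mul_inv_cancel (by norm_num) (by norm_num)]
    rw [Measure.add_apply, Measure.smul_apply, Measure.smul_apply, hA, hB]
    simp only [smul_eq_mul]
    rw [← add_mul, hhalf, one_mul]
  have hAcc : AccP (Pc2masked d μ σ γ η) w = q := by
    rw [show AccP (Pc2masked d μ σ γ η) w = (Pc2masked d μ σ γ η Sevt).toReal from rfl, hPS,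
      ENNReal.toReal_ofReal (by
        rw [hq]
        have := erfc_nonneg_aux (-(c*γ*S / Real.sqrt (2 * Vr)))
        linarith)]
  -- the argument identity
  have h1γ : 0 < 1 + 1/γ^3 := by positivity
  have hargpos : 0 < c*γ*S / Real.sqrt (2 * Vr) := by
    have : 0 < Real.sqrt (2 * Vr) := Real.sqrt_pos.mpr (by positivity)
    positivity
  have hρpos : 0 < (vnorm μ / (Real.sqrt 2 * σ)) / Real.sqrt (1 + 1 / γ ^ 3) := by
    have h2 : 0 < Real.sqrt 2 := Real.sqrt_pos.mpr (by norm_num)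
    have h3 : 0 < Real.sqrt (1 + 1/γ^3) := Real.sqrt_pos.mpr h1γ
    positivity
  have hsq : (c*γ*S / Real.sqrt (2 * Vr))^2
      = ((vnorm μ / (Real.sqrt 2 * σ)) / Real.sqrt (1 + 1 / γ ^ 3))^2 := by
    have ha : (Real.sqrt (2 * Vr))^2 = 2 * Vr := Real.sq_sqrt (by positivity)
    have hb2 : (Real.sqrt 2 * σ)^2 = 2 * σ^2 := by
      rw [mul_pow, Real.sq_sqrt (by norm_num : (0:ℝ) ≤ 2)]
    have hb3 : (Real.sqrt (1 + 1/γ^3))^2 = 1 + 1/γ^3 := Real.sq_sqrt h1γ.le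
    have hb4 : (vnorm μ)^2 = S := by rw [hnorm, Real.sq_sqrt hSpos.le]
    rw [div_pow, div_pow, div_pow, ha, hb2, hb3, hb4, hVr]
    field_simp
  have harg : c*γ*S / Real.sqrt (2 * Vr)
      = (vnorm μ / (Real.sqrt 2 * σ)) / Real.sqrt (1 + 1 / γ ^ 3) :=
    calc c*γ*S / Real.sqrt (2 * Vr)
        = Real.sqrt ((c*γ*S / Real.sqrt (2 * Vr))^2) := (Real.sqrt_sq hargpos.le).symm
      _ = Real.sqrt (((vnorm μ / (Real.sqrt 2 * σ)) / Real.sqrt (1 + 1 / γ ^ 3))^2) := by rw [hsq]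
      _ = _ := Real.sqrt_sq hρpos.le
  rw [hAcc, hq, harg]
end

section
/- Fix p_c ∈ (0, 1) and let P = p_c·P_{c1} + (1−p_c)·P_{c2} be the mixture distribution. Then any w = [w1, w2, w3] ∈ W1 minimizing the population exponential loss E_P[exp(−y·wᵀx)] over W1 satisfies w3 = 0 and w1, w2 ∈ span{μ}; that is, the ERM solution lies in the two-dimensional subspace spanned by [μ, 0_d, 0_d] and [0_d, μ, 0_d]. -/
open MeasureTheory ProbabilityTheory Real Filter
open scoped ENNReal NNReal

/-- The mixture distribution `P = p_c·P_c1 + (1 − p_c)·P_c2`. -/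
noncomputable def Pmix (d : ℕ) (μ : Vec d) (σ γ η : ℝ) (pc : ℝ) : Measure (Inp d × ℝ) :=
  ENNReal.ofReal pc • Pc1 d μ σ γ η + ENNReal.ofReal (1 - pc) • Pc2 d μ σ γ η

section ErmAux

open MeasureTheory ProbabilityTheory Real

/-! ### dot product lemmas -/

lemma dot_neg' {d : ℕ} (c x : Vec d) : dot (fun i => -c i) x = -dot c x := by
  simp [dot, neg_mul, ← Finset.sum_neg_distrib]

lemma dot_neg_right' {d : ℕ} (c m : Vec d) : dot c (fun i => -m i) = -dot c m := by
  simp [dot, mul_neg, ← Finset.sum_neg_distrib]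

lemma dot_mul_right' {d : ℕ} (c m : Vec d) (y : ℝ) :
    dot c (fun i => m i * y) = y * dot c m := by
  simp only [dot, Finset.mul_sum]
  exact Finset.sum_congr rfl fun i _ => by ring

lemma sum_sq_neg' {d : ℕ} (c : Vec d) : ∑ i, (-c i) ^ 2 = ∑ i, c i ^ 2 := by simp

/-! ### 1-d Gaussian MGF -/

lemma gauss_key (m t : ℝ) {v : ℝ} (hv : 0 < v) (x : ℝ) :
    gaussianPDFReal m v.toNNReal x * Real.exp (t * x)
      = Real.exp (t * m + v * t ^ 2 / 2) * gaussianPDFReal (m + v * t) v.toNNReal x := by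
  simp only [gaussianPDFReal, Real.coe_toNNReal _ hv.le]
  rw [mul_assoc, ← Real.exp_add, mul_left_comm, ← Real.exp_add]
  congr 2
  have hv' : v ≠ 0 := hv.ne'
  field_simp
  ring

lemma smul_pdf_eq (m t : ℝ) {v : ℝ} (hv : 0 < v) :
    (fun x => ((gaussianPDFReal m v.toNNReal x).toNNReal : ℝ≥0) • Real.exp (t * x))
      = fun x => Real.exp (t * m + v * t ^ 2 / 2)
          * gaussianPDFReal (m + v * t) v.toNNReal x := by
  funext x
  rw [NNReal.smul_def, smul_eq_mul, Real.coe_toNNReal _ (gaussianPDFReal_nonneg _ _ _),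
    gauss_key m t hv x]

lemma toNNReal_ne_zero_of_pos {v : ℝ} (hv : 0 < v) : v.toNNReal ≠ 0 := by
  simp only [ne_eq, Real.toNNReal_eq_zero, not_le]
  exact hv

lemma integrable_exp_gauss (m t : ℝ) {v : ℝ} (hv : 0 < v) :
    Integrable (fun x => Real.exp (t * x)) (gaussianReal m v.toNNReal) := by
  rw [gaussianReal_of_var_ne_zero _ (toNNReal_ne_zero_of_pos hv)]
  rw [show gaussianPDF m v.toNNReal
      = fun x => (((fun y => (gaussianPDFReal m v.toNNReal y).toNNReal) x : ℝ≥0) : ℝ≥0∞)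
      from rfl]
  rw [integrable_withDensity_iff_integrable_smul
    ((measurable_gaussianPDFReal _ _).real_toNNReal)]
  rw [show (fun x => ((gaussianPDFReal m v.toNNReal x).toNNReal : ℝ≥0) • Real.exp (t * x))
      = _ from smul_pdf_eq m t hv]
  exact (integrable_gaussianPDFReal _ _).const_mul _

lemma integral_exp_gauss (m t : ℝ) {v : ℝ} (hv : 0 < v) :
    ∫ x, Real.exp (t * x) ∂(gaussianReal m v.toNNReal)
      = Real.exp (t * m + v * t ^ 2 / 2) := by
  rw [gaussianReal_of_var_ne_zero _ (toNNReal_ne_zero_of_pos hv)]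
  rw [show gaussianPDF m v.toNNReal
      = fun x => (((fun y => (gaussianPDFReal m v.toNNReal y).toNNReal) x : ℝ≥0) : ℝ≥0∞)
      from rfl]
  rw [integral_withDensity_eq_integral_smul ((measurable_gaussianPDFReal _ _).real_toNNReal)]
  rw [show (fun x => ((gaussianPDFReal m v.toNNReal x).toNNReal : ℝ≥0) • Real.exp (t * x))
      = _ from smul_pdf_eq m t hv]
  rw [MeasureTheory.integral_const_mul,
    integral_gaussianPDFReal_eq_one _ (toNNReal_ne_zero_of_pos hv), mul_one]

/-! ### product integrals over `Measure.pi` -/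

lemma integral_pi_gauss {d : ℕ} (μs : Fin d → Measure ℝ) [h : ∀ i, IsProbabilityMeasure (μs i)]
    (f : Fin d → ℝ → ℝ) :
    ∫ x : Vec d, ∏ i, f i (x i) ∂(Measure.pi μs) = ∏ i, ∫ t, f i t ∂(μs i) :=
  integral_fintype_prod_eq_prod (E := fun _ => ℝ) f (μ := μs)

lemma integrable_pi_gauss {d : ℕ} (μs : Fin d → Measure ℝ)
    [h : ∀ i, IsProbabilityMeasure (μs i)] (f : Fin d → ℝ → ℝ)
    (hf : ∀ i, Integrable (f i) (μs i)) :
    Integrable (fun x : Vec d => ∏ i, f i (x i)) (Measure.pi μs) :=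
  Integrable.fintype_prod_dep (E := fun _ => ℝ) (f := f) (μ := μs) hf

instance gaussVec_prob {d : ℕ} (m : Vec d) (v : ℝ) :
    IsProbabilityMeasure (gaussVec d m v) := by
  unfold gaussVec; infer_instance

lemma exp_dot_eq_prod {d : ℕ} (c : Vec d) :
    (fun x : Vec d => Real.exp (dot c x)) = fun x => ∏ i, Real.exp (c i * x i) :=
  funext fun x => by rw [dot, Real.exp_sum]

lemma mgf_gaussVec {d : ℕ} (c m : Vec d) {v : ℝ} (hv : 0 < v) :
    ∫ x, Real.exp (dot c x) ∂(gaussVec d m v)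
      = Real.exp (dot c m + v * (∑ i, c i ^ 2) / 2) := by
  rw [exp_dot_eq_prod, gaussVec]
  rw [show (∫ x : Vec d, ∏ i, Real.exp (c i * x i)
        ∂(Measure.pi fun i => gaussianReal (m i) (Real.toNNReal v)))
      = ∏ i, ∫ t, Real.exp (c i * t) ∂(gaussianReal (m i) (Real.toNNReal v)) from
      integral_pi_gauss (fun i => gaussianReal (m i) (Real.toNNReal v))
        (fun i t => Real.exp (c i * t))]
  rw [Finset.prod_congr rfl (fun i _ => integral_exp_gauss (m i) (c i) hv), ← Real.exp_sum]
  congr 1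
  rw [Finset.sum_add_distrib, dot]
  congr 1
  rw [← Finset.sum_div, ← Finset.mul_sum]

lemma integrable_exp_dot {d : ℕ} (c m : Vec d) {v : ℝ} (hv : 0 < v) :
    Integrable (fun x : Vec d => Real.exp (dot c x)) (gaussVec d m v) := by
  rw [exp_dot_eq_prod, gaussVec]
  exact integrable_pi_gauss _ _ fun i => integrable_exp_gauss (m i) (c i) hv

/-! ### triple product integrals -/

lemma triple_integrand_eq {d : ℕ} (c1 c2 c3 : Vec d) :
    (fun x : Inp d => Real.exp (dot c1 x.1 + dot c2 x.2.1 + dot c3 x.2.2))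
      = fun x : Inp d => Real.exp (dot c1 x.1)
          * (Real.exp (dot c2 x.2.1) * Real.exp (dot c3 x.2.2)) := by
  funext x
  simp [Real.exp_add, mul_assoc]

lemma integral_triple {d : ℕ} (μ1 μ2 μ3 : Measure (Vec d)) [IsProbabilityMeasure μ1]
    [IsProbabilityMeasure μ2] [IsProbabilityMeasure μ3] (c1 c2 c3 : Vec d) :
    ∫ x : Inp d, Real.exp (dot c1 x.1 + dot c2 x.2.1 + dot c3 x.2.2) ∂(μ1.prod (μ2.prod μ3))
      = (∫ x, Real.exp (dot c1 x) ∂μ1) * ((∫ x, Real.exp (dot c2 x) ∂μ2)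
          * ∫ x, Real.exp (dot c3 x) ∂μ3) := by
  rw [triple_integrand_eq]
  rw [show (∫ x : Inp d, Real.exp (dot c1 x.1)
        * (Real.exp (dot c2 x.2.1) * Real.exp (dot c3 x.2.2)) ∂(μ1.prod (μ2.prod μ3)))
      = (∫ x, Real.exp (dot c1 x) ∂μ1) * (∫ y : Vec d × Vec d,
          Real.exp (dot c2 y.1) * Real.exp (dot c3 y.2) ∂(μ2.prod μ3)) from
      integral_prod_mul (f := fun a : Vec d => Real.exp (dot c1 a))
        (g := fun b : Vec d × Vec d => Real.exp (dot c2 b.1) * Real.exp (dot c3 b.2))]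
  rw [show (∫ y : Vec d × Vec d, Real.exp (dot c2 y.1) * Real.exp (dot c3 y.2) ∂(μ2.prod μ3))
      = (∫ x, Real.exp (dot c2 x) ∂μ2) * (∫ x, Real.exp (dot c3 x) ∂μ3) from
      integral_prod_mul (f := fun a : Vec d => Real.exp (dot c2 a))
        (g := fun a : Vec d => Real.exp (dot c3 a))]

lemma integrable_triple {d : ℕ} (μ1 μ2 μ3 : Measure (Vec d)) [IsProbabilityMeasure μ1]
    [IsProbabilityMeasure μ2] [IsProbabilityMeasure μ3] {c1 c2 c3 : Vec d}
    (h1 : Integrable (fun x => Real.exp (dot c1 x)) μ1)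
    (h2 : Integrable (fun x => Real.exp (dot c2 x)) μ2)
    (h3 : Integrable (fun x => Real.exp (dot c3 x)) μ3) :
    Integrable (fun x : Inp d => Real.exp (dot c1 x.1 + dot c2 x.2.1 + dot c3 x.2.2))
      (μ1.prod (μ2.prod μ3)) := by
  rw [triple_integrand_eq]
  exact h1.mul_prod (h2.mul_prod h3)

/-! ### joint distribution -/

lemma continuous_pred {d : ℕ} (w : Inp d) : Continuous (pred w) := by
  have hdot : ∀ c : Vec d, Continuous fun y : Vec d => dot c y := fun c =>
    continuous_finset_sum _ fun i _ => continuous_const.mul (continuous_apply i)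
  exact (((hdot w.1).comp continuous_fst).add
    (((hdot w.2.1).comp (continuous_fst.comp continuous_snd)))).add
    ((hdot w.2.2).comp (continuous_snd.comp continuous_snd))

lemma continuous_loss {d : ℕ} (w : Inp d) :
    Continuous fun p : Inp d × ℝ => Real.exp (-(p.2 * pred w p.1)) :=
  Real.continuous_exp.comp (continuous_snd.mul ((continuous_pred w).comp continuous_fst)).neg

lemma integrable_prod_dirac {d : ℕ} (w : Inp d) (y : ℝ) (m : Measure (Inp d))
    [IsProbabilityMeasure m]
    (hint : Integrable (fun x : Inp d => Real.exp (-(y * pred w x))) m) :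
    Integrable (fun p : Inp d × ℝ => Real.exp (-(p.2 * pred w p.1)))
      (m.prod (Measure.dirac y)) := by
  rw [Measure.prod_dirac]
  rw [integrable_map_measure (continuous_loss w).aestronglyMeasurable
    (measurable_prodMk_right).aemeasurable]
  exact hint

lemma integrable_joint {d : ℕ} (cond : ℝ → Measure (Inp d)) (w : Inp d)
    [IsProbabilityMeasure (cond 1)] [IsProbabilityMeasure (cond (-1))]
    (h1 : Integrable (fun x : Inp d => Real.exp (-pred w x)) (cond 1))
    (h2 : Integrable (fun x : Inp d => Real.exp (pred w x)) (cond (-1))) :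
    Integrable (fun p : Inp d × ℝ => Real.exp (-(p.2 * pred w p.1))) (jointOf cond) := by
  unfold jointOf
  rw [integrable_add_measure]
  constructor
  · exact (integrable_prod_dirac w 1 (cond 1) (by simpa using h1)).smul_measure
      (by norm_num)
  · exact (integrable_prod_dirac w (-1) (cond (-1)) (by simpa using h2)).smul_measure
      (by norm_num)

lemma expLoss_jointOf {d : ℕ} (cond : ℝ → Measure (Inp d)) (w : Inp d)
    [IsProbabilityMeasure (cond 1)] [IsProbabilityMeasure (cond (-1))]
    (h1 : Integrable (fun x : Inp d => Real.exp (-pred w x)) (cond 1))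
    (h2 : Integrable (fun x : Inp d => Real.exp (pred w x)) (cond (-1))) :
    expLoss (jointOf cond) w
      = ((∫ x, Real.exp (-pred w x) ∂(cond 1))
          + ∫ x, Real.exp (pred w x) ∂(cond (-1))) / 2 := by
  unfold expLoss jointOf
  rw [integral_add_measure
    ((integrable_prod_dirac w 1 (cond 1) (by simpa using h1)).smul_measure (by norm_num))
    ((integrable_prod_dirac w (-1) (cond (-1)) (by simpa using h2)).smul_measure (by norm_num)),
    integral_smul_measure, integral_smul_measure, Measure.prod_dirac, Measure.prod_dirac,
    integral_map (measurable_prodMk_right).aemeasurable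
      (by rw [← Measure.prod_dirac]; exact (continuous_loss w).aestronglyMeasurable),
    integral_map (measurable_prodMk_right).aemeasurable
      (by rw [← Measure.prod_dirac]; exact (continuous_loss w).aestronglyMeasurable)]
  simp only [neg_mul, one_mul, neg_neg]
  rw [show ((2 : ℝ≥0∞)⁻¹).toReal = (2 : ℝ)⁻¹ by simp]
  simp only [smul_eq_mul]
  ring

/-! ### probability instances for the conditional laws -/

instance condX1_prob (d : ℕ) (μ : Vec d) (σ γ η y : ℝ) :
    IsProbabilityMeasure (condX1 d μ σ γ η y) := by
  unfold condX1; infer_instance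

instance condX2_prob (d : ℕ) (μ : Vec d) (σ γ η y : ℝ) :
    IsProbabilityMeasure (condX2 d μ σ γ η y) := by
  unfold condX2; infer_instance

/-! ### closed forms -/

noncomputable def Gv (d : ℕ) (μ : Vec d) (σ γ pc : ℝ) (w : Inp d) : ℝ :=
  pc * Real.exp (σ ^ 2 * (∑ i, w.1 i ^ 2) / 2 + γ * σ ^ 2 * (∑ i, w.2.1 i ^ 2) / 2
      - dot w.1 μ - dot w.2.1 μ)
    + (1 - pc) * Real.exp (σ ^ 2 * (∑ i, w.1 i ^ 2) / 2 + σ ^ 2 / γ * (∑ i, w.2.1 i ^ 2) / 2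
      - dot w.1 μ + dot w.2.1 μ)

noncomputable def Kv (d : ℕ) (μ : Vec d) (η : ℝ) (w : Inp d) : ℝ :=
  (Real.exp (dot w.2.2 μ) + Real.exp (-dot w.2.2 μ)) / 2
    * Real.exp (η ^ 2 * (∑ i, w.2.2 i ^ 2) / 2)

lemma neg_pred_eq {d : ℕ} (w : Inp d) :
    (fun x : Inp d => Real.exp (-pred w x))
      = fun x : Inp d => Real.exp (dot (fun i => -w.1 i) x.1 + dot (fun i => -w.2.1 i) x.2.1
          + dot (fun i => -w.2.2 i) x.2.2) :=
  funext fun x => by simp only [pred, dot_neg']; ring_nf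

lemma pos_pred_eq {d : ℕ} (w : Inp d) :
    (fun x : Inp d => Real.exp (pred w x))
      = fun x : Inp d => Real.exp (dot w.1 x.1 + dot w.2.1 x.2.1 + dot w.2.2 x.2.2) :=
  funext fun x => rfl

lemma closed_form (d : ℕ) (μ : Vec d) {σ γ η pc : ℝ} (hσ : 0 < σ) (hγ : 0 < γ)
    (hη : 0 < η) (hpc0 : 0 ≤ pc) (hpc1 : pc ≤ 1) (w : Inp d) :
    expLoss (Pmix d μ σ γ η pc) w = Gv d μ σ γ pc w * Kv d μ η w := by
  have hv1 : (0:ℝ) < σ ^ 2 := by positivity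
  have hv2 : (0:ℝ) < γ * σ ^ 2 := by positivity
  have hv2' : (0:ℝ) < σ ^ 2 / γ := by positivity
  have hv3 : (0:ℝ) < η ^ 2 := by positivity
  -- integrability for each conditional law
  have i1p : Integrable (fun x : Inp d => Real.exp (-pred w x)) (condX1 d μ σ γ η 1) := by
    rw [neg_pred_eq]; unfold condX1
    exact integrable_triple _ _ _ (integrable_exp_dot _ _ hv1) (integrable_exp_dot _ _ hv2)
      (integrable_exp_dot _ _ hv3)
  have i1m : Integrable (fun x : Inp d => Real.exp (pred w x)) (condX1 d μ σ γ η (-1)) := by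
    rw [pos_pred_eq]; unfold condX1
    exact integrable_triple _ _ _ (integrable_exp_dot _ _ hv1) (integrable_exp_dot _ _ hv2)
      (integrable_exp_dot _ _ hv3)
  have i2p : Integrable (fun x : Inp d => Real.exp (-pred w x)) (condX2 d μ σ γ η 1) := by
    rw [neg_pred_eq]; unfold condX2
    exact integrable_triple _ _ _ (integrable_exp_dot _ _ hv1) (integrable_exp_dot _ _ hv2')
      (integrable_exp_dot _ _ hv3)
  have i2m : Integrable (fun x : Inp d => Real.exp (pred w x)) (condX2 d μ σ γ η (-1)) := by
    rw [pos_pred_eq]; unfold condX2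
    exact integrable_triple _ _ _ (integrable_exp_dot _ _ hv1) (integrable_exp_dot _ _ hv2')
      (integrable_exp_dot _ _ hv3)
  -- split the mixture
  have hsplit : expLoss (Pmix d μ σ γ η pc) w
      = pc * expLoss (Pc1 d μ σ γ η) w + (1 - pc) * expLoss (Pc2 d μ σ γ η) w := by
    unfold expLoss Pmix Pc1 Pc2
    rw [integral_add_measure
      ((integrable_joint _ w i1p i1m).smul_measure ENNReal.ofReal_ne_top)
      ((integrable_joint _ w i2p i2m).smul_measure ENNReal.ofReal_ne_top),
      integral_smul_measure, integral_smul_measure, ENNReal.toReal_ofReal hpc0,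
      ENNReal.toReal_ofReal (by linarith), smul_eq_mul, smul_eq_mul]
  rw [hsplit]
  have hL1 : expLoss (Pc1 d μ σ γ η) w
      = ((∫ x, Real.exp (-pred w x) ∂(condX1 d μ σ γ η 1))
        + ∫ x, Real.exp (pred w x) ∂(condX1 d μ σ γ η (-1))) / 2 :=
    expLoss_jointOf _ w i1p i1m
  have hL2 : expLoss (Pc2 d μ σ γ η) w
      = ((∫ x, Real.exp (-pred w x) ∂(condX2 d μ σ γ η 1))
        + ∫ x, Real.exp (pred w x) ∂(condX2 d μ σ γ η (-1))) / 2 :=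
    expLoss_jointOf _ w i2p i2m
  rw [hL1, hL2]
  -- compute the four integrals
  have hI1p : ∫ x, Real.exp (-pred w x) ∂(condX1 d μ σ γ η 1)
      = Real.exp (-dot w.1 μ + σ ^ 2 * (∑ i, w.1 i ^ 2) / 2)
        * (Real.exp (-dot w.2.1 μ + γ * σ ^ 2 * (∑ i, w.2.1 i ^ 2) / 2)
          * Real.exp (-dot w.2.2 μ + η ^ 2 * (∑ i, w.2.2 i ^ 2) / 2)) := by
    rw [neg_pred_eq]; unfold condX1
    rw [integral_triple, mgf_gaussVec _ _ hv1, mgf_gaussVec _ _ hv2, mgf_gaussVec _ _ hv3]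
    simp [dot_neg', dot_mul_right', sum_sq_neg']
  have hI1m : ∫ x, Real.exp (pred w x) ∂(condX1 d μ σ γ η (-1))
      = Real.exp (-dot w.1 μ + σ ^ 2 * (∑ i, w.1 i ^ 2) / 2)
        * (Real.exp (-dot w.2.1 μ + γ * σ ^ 2 * (∑ i, w.2.1 i ^ 2) / 2)
          * Real.exp (dot w.2.2 μ + η ^ 2 * (∑ i, w.2.2 i ^ 2) / 2)) := by
    rw [pos_pred_eq]; unfold condX1
    rw [integral_triple, mgf_gaussVec _ _ hv1, mgf_gaussVec _ _ hv2, mgf_gaussVec _ _ hv3]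
    simp [dot_neg', dot_neg_right', dot_mul_right', sum_sq_neg']
  have hI2p : ∫ x, Real.exp (-pred w x) ∂(condX2 d μ σ γ η 1)
      = Real.exp (-dot w.1 μ + σ ^ 2 * (∑ i, w.1 i ^ 2) / 2)
        * (Real.exp (dot w.2.1 μ + σ ^ 2 / γ * (∑ i, w.2.1 i ^ 2) / 2)
          * Real.exp (dot w.2.2 μ + η ^ 2 * (∑ i, w.2.2 i ^ 2) / 2)) := by
    rw [neg_pred_eq]; unfold condX2
    rw [integral_triple, mgf_gaussVec _ _ hv1, mgf_gaussVec _ _ hv2', mgf_gaussVec _ _ hv3]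
    simp [dot_neg', dot_neg_right', dot_mul_right', sum_sq_neg']
  have hI2m : ∫ x, Real.exp (pred w x) ∂(condX2 d μ σ γ η (-1))
      = Real.exp (-dot w.1 μ + σ ^ 2 * (∑ i, w.1 i ^ 2) / 2)
        * (Real.exp (dot w.2.1 μ + σ ^ 2 / γ * (∑ i, w.2.1 i ^ 2) / 2)
          * Real.exp (-dot w.2.2 μ + η ^ 2 * (∑ i, w.2.2 i ^ 2) / 2)) := by
    rw [pos_pred_eq]; unfold condX2
    rw [integral_triple, mgf_gaussVec _ _ hv1, mgf_gaussVec _ _ hv2', mgf_gaussVec _ _ hv3]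
    simp [dot_neg', dot_neg_right', dot_mul_right', sum_sq_neg']
  rw [hI1p, hI1m, hI2p, hI2m]
  unfold Gv Kv
  simp only [sub_eq_add_neg, Real.exp_add]
  ring

end ErmAux

lemma sum_sq_pos_of_ne_zero {d : ℕ} {v : Vec d} (hv : v ≠ 0) : 0 < ∑ i, v i ^ 2 := by
  have hex : ∃ i, v i ≠ 0 := by
    by_contra hc
    push_neg at hc
    exact hv (funext hc)
  obtain ⟨i, hi⟩ := hex
  exact Finset.sum_pos' (fun j _ => sq_nonneg _) ⟨i, Finset.mem_univ i, by positivity⟩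

theorem erm_solution_in_subspace (d : ℕ) (hd : 1 ≤ d) (μ : Vec d) (hμ : μ ≠ 0)
    (σ γ η : ℝ) (hσ : 0 < σ) (hγ : 0 < γ) (hη : 0 < η)
    (pc : ℝ) (hpc : pc ∈ Set.Ioo (0 : ℝ) 1)
    (w : Inp d) (hmem : w ∈ W1 d)
    (hmin : ∀ w' ∈ W1 d,
      expLoss (Pmix d μ σ γ η pc) w ≤ expLoss (Pmix d μ σ γ η pc) w') :
    w.2.2 = 0 ∧ (∃ a : ℝ, w.1 = a • μ) ∧ (∃ b : ℝ, w.2.1 = b • μ) := by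
  obtain ⟨hpc0, hpc1⟩ := hpc
  have hmemx : xnorm w ≤ 1 := hmem
  have hGpos : 0 < Gv d μ σ γ pc w :=
    add_pos (mul_pos hpc0 (Real.exp_pos _)) (mul_pos (by linarith) (Real.exp_pos _))
  have hKpos : 0 < Kv d μ η w := by
    unfold Kv; positivity
  have hcf : ∀ w' : Inp d, expLoss (Pmix d μ σ γ η pc) w' = Gv d μ σ γ pc w' * Kv d μ η w' :=
    fun w' => closed_form d μ hσ hγ hη hpc0.le (by linarith) w'
  have hnm : 0 < ∑ i, μ i ^ 2 := sum_sq_pos_of_ne_zero hμ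
  refine ⟨?_, ?_, ?_⟩
  · -- w3 = 0
    by_contra h3
    have hS3 : 0 < ∑ i, w.2.2 i ^ 2 := sum_sq_pos_of_ne_zero h3
    have hmem' : (w.1, w.2.1, (0 : Vec d)) ∈ W1 d := by
      show xnorm (w.1, w.2.1, (0 : Vec d)) ≤ 1
      refine le_trans ?_ hmemx
      unfold xnorm
      refine Real.sqrt_le_sqrt ?_
      have h0 : (∑ i : Fin d, ((0 : Vec d) i) ^ 2) = 0 := by simp
      simp only [h0]
      linarith
    have hle := hmin _ hmem'
    rw [hcf w, hcf _] at hle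
    have hGw' : Gv d μ σ γ pc (w.1, w.2.1, (0 : Vec d)) = Gv d μ σ γ pc w := rfl
    have hKw' : Kv d μ η (w.1, w.2.1, (0 : Vec d)) = 1 := by
      unfold Kv
      have hd0 : dot (0 : Vec d) μ = 0 := by simp [dot]
      have hs0 : (∑ i : Fin d, ((0 : Vec d) i) ^ 2) = 0 := by simp
      rw [hd0, hs0]
      norm_num
    rw [hGw', hKw', mul_one] at hle
    have hKgt : 1 < Kv d μ η w := by
      unfold Kv
      have h1 : (2:ℝ) ≤ Real.exp (dot w.2.2 μ) + Real.exp (-dot w.2.2 μ) := by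
        have a1 := Real.add_one_le_exp (dot w.2.2 μ)
        have a2 := Real.add_one_le_exp (-dot w.2.2 μ)
        linarith
      have hx : 0 < η ^ 2 * (∑ i, w.2.2 i ^ 2) / 2 := by positivity
      have h2 : 1 < Real.exp (η ^ 2 * (∑ i, w.2.2 i ^ 2) / 2) := by
        have := Real.add_one_le_exp (η ^ 2 * (∑ i, w.2.2 i ^ 2) / 2)
        linarith
      nlinarith
    nlinarith
  · -- w1 parallel to μ
    set a : ℝ := dot w.1 μ / (∑ i, μ i ^ 2) with ha
    refine ⟨a, ?_⟩
    by_contra hne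
    have hu : (fun i => w.1 i - a * μ i) ≠ 0 := by
      intro h
      apply hne
      funext i
      have := congrFun h i
      simp only [Pi.zero_apply] at this
      have : w.1 i = a * μ i := by linarith
      simpa [Pi.smul_apply, smul_eq_mul] using this
    have huS : 0 < ∑ i, (w.1 i - a * μ i) ^ 2 := sum_sq_pos_of_ne_zero hu
    have hdot : dot (a • μ) μ = dot w.1 μ := by
      have : dot (a • μ) μ = a * ∑ i, μ i ^ 2 := by
        simp only [dot, Pi.smul_apply, smul_eq_mul, Finset.mul_sum]
        exact Finset.sum_congr rfl fun i _ => by ring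
      rw [this, ha]
      field_simp
    have horth : ∑ i, (w.1 i - a * μ i) * μ i = 0 := by
      have hexp : ∑ i, (w.1 i - a * μ i) * μ i = dot w.1 μ - a * ∑ i, μ i ^ 2 := by
        rw [dot, Finset.mul_sum, ← Finset.sum_sub_distrib]
        exact Finset.sum_congr rfl fun i _ => by ring
      rw [hexp, ha]
      field_simp
      ring
    have hsum : ∑ i, ((a • μ) i) ^ 2 = (∑ i, w.1 i ^ 2) - ∑ i, (w.1 i - a * μ i) ^ 2 := by
      have hexp : ∑ i, w.1 i ^ 2
          = ∑ i, (((a • μ) i) ^ 2 + (w.1 i - a * μ i) ^ 2 + 2 * a * ((w.1 i - a * μ i) * μ i)) :=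
        Finset.sum_congr rfl fun i _ => by simp only [Pi.smul_apply, smul_eq_mul]; ring
      rw [Finset.sum_add_distrib, Finset.sum_add_distrib, ← Finset.mul_sum, horth] at hexp
      linarith
    have hlt : ∑ i, ((a • μ) i) ^ 2 < ∑ i, w.1 i ^ 2 := by
      rw [hsum]; linarith
    have hmem' : ((a • μ : Vec d), w.2.1, w.2.2) ∈ W1 d := by
      show xnorm ((a • μ : Vec d), w.2.1, w.2.2) ≤ 1
      refine le_trans ?_ hmemx
      unfold xnorm
      exact Real.sqrt_le_sqrt (by linarith)
    have hle := hmin _ hmem'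
    rw [hcf w, hcf _] at hle
    have hKw' : Kv d μ η ((a • μ : Vec d), w.2.1, w.2.2) = Kv d μ η w := rfl
    have hGlt : Gv d μ σ γ pc ((a • μ : Vec d), w.2.1, w.2.2) < Gv d μ σ γ pc w := by
      unfold Gv
      simp only []
      have he1 : Real.exp (σ ^ 2 * (∑ i, ((a • μ : Vec d)) i ^ 2) / 2
            + γ * σ ^ 2 * (∑ i, w.2.1 i ^ 2) / 2 - dot (a • μ : Vec d) μ - dot w.2.1 μ)
          < Real.exp (σ ^ 2 * (∑ i, w.1 i ^ 2) / 2
            + γ * σ ^ 2 * (∑ i, w.2.1 i ^ 2) / 2 - dot w.1 μ - dot w.2.1 μ) := by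
        apply Real.exp_lt_exp.mpr
        rw [hdot]
        have : σ ^ 2 * (∑ i, ((a • μ : Vec d)) i ^ 2) < σ ^ 2 * (∑ i, w.1 i ^ 2) :=
          mul_lt_mul_of_pos_left hlt (by positivity)
        linarith
      have he2 : Real.exp (σ ^ 2 * (∑ i, ((a • μ : Vec d)) i ^ 2) / 2
            + σ ^ 2 / γ * (∑ i, w.2.1 i ^ 2) / 2 - dot (a • μ : Vec d) μ + dot w.2.1 μ)
          < Real.exp (σ ^ 2 * (∑ i, w.1 i ^ 2) / 2
            + σ ^ 2 / γ * (∑ i, w.2.1 i ^ 2) / 2 - dot w.1 μ + dot w.2.1 μ) := by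
        apply Real.exp_lt_exp.mpr
        rw [hdot]
        have : σ ^ 2 * (∑ i, ((a • μ : Vec d)) i ^ 2) < σ ^ 2 * (∑ i, w.1 i ^ 2) :=
          mul_lt_mul_of_pos_left hlt (by positivity)
        linarith
      exact add_lt_add (mul_lt_mul_of_pos_left he1 hpc0)
        (mul_lt_mul_of_pos_left he2 (by linarith))
    rw [hKw'] at hle
    nlinarith
  · -- w2 parallel to μ
    set b : ℝ := dot w.2.1 μ / (∑ i, μ i ^ 2) with hb
    refine ⟨b, ?_⟩
    by_contra hne
    have hu : (fun i => w.2.1 i - b * μ i) ≠ 0 := by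
      intro h
      apply hne
      funext i
      have := congrFun h i
      simp only [Pi.zero_apply] at this
      have : w.2.1 i = b * μ i := by linarith
      simpa [Pi.smul_apply, smul_eq_mul] using this
    have huS : 0 < ∑ i, (w.2.1 i - b * μ i) ^ 2 := sum_sq_pos_of_ne_zero hu
    have hdot : dot (b • μ) μ = dot w.2.1 μ := by
      have : dot (b • μ) μ = b * ∑ i, μ i ^ 2 := by
        simp only [dot, Pi.smul_apply, smul_eq_mul, Finset.mul_sum]
        exact Finset.sum_congr rfl fun i _ => by ring
      rw [this, hb]
      field_simp
    have horth : ∑ i, (w.2.1 i - b * μ i) * μ i = 0 := by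
      have hexp : ∑ i, (w.2.1 i - b * μ i) * μ i = dot w.2.1 μ - b * ∑ i, μ i ^ 2 := by
        rw [dot, Finset.mul_sum, ← Finset.sum_sub_distrib]
        exact Finset.sum_congr rfl fun i _ => by ring
      rw [hexp, hb]
      field_simp
      ring
    have hsum : ∑ i, ((b • μ) i) ^ 2 = (∑ i, w.2.1 i ^ 2) - ∑ i, (w.2.1 i - b * μ i) ^ 2 := by
      have hexp : ∑ i, w.2.1 i ^ 2
          = ∑ i, (((b • μ) i) ^ 2 + (w.2.1 i - b * μ i) ^ 2
            + 2 * b * ((w.2.1 i - b * μ i) * μ i)) :=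
        Finset.sum_congr rfl fun i _ => by simp only [Pi.smul_apply, smul_eq_mul]; ring
      rw [Finset.sum_add_distrib, Finset.sum_add_distrib, ← Finset.mul_sum, horth] at hexp
      linarith
    have hlt : ∑ i, ((b • μ) i) ^ 2 < ∑ i, w.2.1 i ^ 2 := by
      rw [hsum]; linarith
    have hmem' : (w.1, (b • μ : Vec d), w.2.2) ∈ W1 d := by
      show xnorm (w.1, (b • μ : Vec d), w.2.2) ≤ 1
      refine le_trans ?_ hmemx
      unfold xnorm
      exact Real.sqrt_le_sqrt (by linarith)
    have hle := hmin _ hmem'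
    rw [hcf w, hcf _] at hle
    have hKw' : Kv d μ η (w.1, (b • μ : Vec d), w.2.2) = Kv d μ η w := rfl
    have hGlt : Gv d μ σ γ pc (w.1, (b • μ : Vec d), w.2.2) < Gv d μ σ γ pc w := by
      unfold Gv
      simp only []
      have he1 : Real.exp (σ ^ 2 * (∑ i, w.1 i ^ 2) / 2
            + γ * σ ^ 2 * (∑ i, ((b • μ : Vec d)) i ^ 2) / 2 - dot w.1 μ - dot (b • μ : Vec d) μ)
          < Real.exp (σ ^ 2 * (∑ i, w.1 i ^ 2) / 2
            + γ * σ ^ 2 * (∑ i, w.2.1 i ^ 2) / 2 - dot w.1 μ - dot w.2.1 μ) := by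
        apply Real.exp_lt_exp.mpr
        rw [hdot]
        have : γ * σ ^ 2 * (∑ i, ((b • μ : Vec d)) i ^ 2) < γ * σ ^ 2 * (∑ i, w.2.1 i ^ 2) :=
          mul_lt_mul_of_pos_left hlt (by positivity)
        linarith
      have he2 : Real.exp (σ ^ 2 * (∑ i, w.1 i ^ 2) / 2
            + σ ^ 2 / γ * (∑ i, ((b • μ : Vec d)) i ^ 2) / 2 - dot w.1 μ + dot (b • μ : Vec d) μ)
          < Real.exp (σ ^ 2 * (∑ i, w.1 i ^ 2) / 2
            + σ ^ 2 / γ * (∑ i, w.2.1 i ^ 2) / 2 - dot w.1 μ + dot w.2.1 μ) := by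
        apply Real.exp_lt_exp.mpr
        rw [hdot]
        have : σ ^ 2 / γ * (∑ i, ((b • μ : Vec d)) i ^ 2) < σ ^ 2 / γ * (∑ i, w.2.1 i ^ 2) :=
          mul_lt_mul_of_pos_left hlt (by positivity)
        linarith
      exact add_lt_add (mul_lt_mul_of_pos_left he1 hpc0)
        (mul_lt_mul_of_pos_left he2 (by linarith))
    rw [hKw'] at hle
    nlinarith
end
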